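/- In an integral rig, for all x, y and all m, n ∈ ℕ, (x + y)^(m·n) ≤ x^m + y^n in the canonical order. -/

import Mathlib

/-- The canonical pre-order of a rig. -/
def rigLe {A : Type*} [CommSemiring A] (x y : A) : Prop := ∃ w, w + x = y

private lemma absorb {A : Type*} [CommSemiring A] (hint : ∀ x : A, 1 + x = 1)
    (z r : A) : z * r + z = z := by
  have h : r + 1 = 1 := by rw [add_comm]; exact hint r
  calc z * r + z = z * (r + 1) := by ring
    _ = z := by rw [h, mul_one]

private lemma sum_absorb {A : Type*} [CommSemiring A] {s : Finset ℕ}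
    {f : ℕ → A} {z : A} (h : ∀ i ∈ s, f i + z = z) : (∑ i ∈ s, f i) + z = z := by
  induction s using Finset.induction_on with
  | empty => simp
  | insert a s hnot ih =>
    rw [Finset.sum_insert hnot, add_assoc,
      ih (fun i hi => h i (Finset.mem_insert_of_mem hi)),
      h a (Finset.mem_insert_self a s)]

/-- In an integral rig, `(x + y)^(m·n) ≤ x^m + y^n`. -/
theorem pow_mul_add_le {A : Type*} [CommSemiring A]
    (hint : ∀ x : A, 1 + x = 1) (x y : A) (m n : ℕ) :
    rigLe ((x + y) ^ (m * n)) (x ^ m + y ^ n) := by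
  set z := x ^ m + y ^ n with hz
  refine ⟨z, ?_⟩
  suffices h : (x + y) ^ (m * n) + z = z by
    rw [add_comm] at h; exact h
  rw [add_pow]
  -- absorb each summand
  have key : ∀ i ∈ Finset.range (m * n + 1),
      x ^ i * y ^ (m * n - i) * (m * n).choose i + z = z := by
    intro i hi
    rw [Finset.mem_range] at hi
    have hcase : m ≤ i ∨ n ≤ m * n - i := by
      by_contra hc
      push_neg at hc
      obtain ⟨h1, h2⟩ := hc
      have hm : 1 ≤ m := by omega
      have hn : 1 ≤ n := by omega
      have : m + n ≤ m * n + 1 := by nlinarith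
      omega
    rcases hcase with hle | hle
    · have : x ^ i * y ^ (m * n - i) * (m * n).choose i
          = x ^ m * (x ^ (i - m) * y ^ (m * n - i) * (m * n).choose i) := by
        rw [show x ^ i = x ^ m * x ^ (i - m) by
          rw [← pow_add]; congr 1; omega]
        ring
      rw [this, hz, ← add_assoc, absorb hint]
    · have : x ^ i * y ^ (m * n - i) * (m * n).choose i
          = y ^ n * (x ^ i * y ^ (m * n - i - n) * (m * n).choose i) := by
        rw [show y ^ (m * n - i) = y ^ n * y ^ (m * n - i - n) by
          rw [← pow_add]; congr 1; omega]
        ring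
      rw [this, hz, add_comm (x ^ m), ← add_assoc, absorb hint, add_comm]
  exact sum_absorb key
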